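/- Let P ⊆ S^{N−1} be a finite root system in ℝ^N (N ≥ 1) satisfying condition (EA), let ρ ≥ 0, and let Ω ⊆ ℝ^N satisfy the reflection property (RP) with respect to P and ρ. Suppose x ∈ Ω and |x| ≥ σ1(P)⁻¹σ2(P)(ρ + c·σ3(P)⁻¹) for some c > 0. Then there exists z₀ ∈ ℝ^N with |x − z₀| ≤ c/(2σ3(P)) such that the open ball B(z₀, c) is contained in Ω. -/

import Mathlib

open scoped RealInnerProductSpace
open Metric Set MeasureTheory

noncomputable section

abbrev E (N : ℕ) := EuclideanSpace ℝ (Fin N)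

variable {N : ℕ}

/-- Reflection across the hyperplane `Π_p(s) = {x | x·p = s}`. -/
def reflect (p : E N) (s : ℝ) (x : E N) : E N := x - (2 * (⟪x, p⟫ - s)) • p

/-- Reflection across the hyperplane through the origin orthogonal to `p`. -/
def reflect0 (p : E N) : E N → E N := reflect p 0

/-- A finite root system of unit vectors. -/
def IsRootSystem (P : Set (E N)) : Prop :=
  P.Finite ∧ (∀ p ∈ P, ‖p‖ = 1) ∧
  (∀ p ∈ P, {q | q ∈ P ∧ ∃ c : ℝ, q = c • p} = {p, -p}) ∧
  (∀ p ∈ P, reflect0 p '' P = P)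

/-- Condition (EA): for every hyperplane through the origin (with normal `v ≠ 0`),
the part of `P` outside the hyperplane spans `ℝ^N`. -/
def CondEA (P : Set (E N)) : Prop :=
  ∀ v : E N, v ≠ 0 → Submodule.span ℝ {p | p ∈ P ∧ ⟪p, v⟫ ≠ 0} = ⊤

/-- The reflection property (RP) with respect to `P` and `ρ`. -/
def ReflProp (P : Set (E N)) (ρ : ℝ) (Ω : Set (E N)) : Prop :=
  ∀ p ∈ P, ∀ s > ρ,
    reflect p s '' Ω ∩ {x | ⟪x, p⟫ < s} ⊆ Ω ∩ {x | ⟪x, p⟫ < s}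

/-- `v` enumerates a basis of `ℝ^N` consisting of elements of `P`. -/
def BasisIn (P : Set (E N)) (v : Fin N → E N) : Prop :=
  (∀ i, v i ∈ P) ∧ LinearIndependent ℝ v ∧ Submodule.span ℝ (Set.range v) = ⊤

/-- The open cone `Co_r(A)` generated by a basis. -/
def Cone (r : ℝ) (v : Fin N → E N) : Set (E N) :=
  {x | ∃ a : Fin N → ℝ, (∀ i, 0 < a i) ∧ (∑ i, a i) < r ∧ x = ∑ i, a i • v i}

/-- `σ₁(P)`. -/
def sigma1 (P : Set (E N)) : ℝ :=
  sInf {s | ∃ p₁ ∈ P, s = sSup {t | ∃ v : Fin N → E N, BasisIn P v ∧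
    t = sInf (Set.range fun i => |⟪v i, p₁⟫|)}}

/-- `σ₂(P)`. -/
def sigma2 (P : Set (E N)) : ℝ :=
  sSup {t | ∃ x : E N, (∀ p ∈ P, |⟪p, x⟫| ≤ 1) ∧ t = ‖x‖}

/-- `σ₃(P)`. -/
def sigma3 (P : Set (E N)) : ℝ :=
  sInf {s | ∃ v : Fin N → E N, BasisIn P v ∧
    s = sSup {r | 0 < r ∧ ball ((1 / (2 * (N : ℝ))) • ∑ i, v i) r ⊆ Cone 1 v}}


lemma neg_mem_rs {P : Set (E N)} (hP : IsRootSystem P) {q : E N} (hq : q ∈ P) : -q ∈ P := by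
  have h := hP.2.2.1 q hq
  have h2 : -q ∈ ({q, -q} : Set (E N)) := by simp
  rw [← h] at h2; exact h2.1

lemma reflect0_mem_rs {P : Set (E N)} (hP : IsRootSystem P) {p q : E N} (hp : p ∈ P)
    (hq : q ∈ P) : q - (2 * ⟪q, p⟫) • p ∈ P := by
  have h := hP.2.2.2 p hp
  have h2 : reflect0 p q ∈ reflect0 p '' P := ⟨q, hq, rfl⟩
  rw [h] at h2
  simpa [reflect0, reflect] using h2

lemma exists_basis_subset {C : Set (E N)} (hspan : Submodule.span ℝ C = ⊤) :
    ∃ v : Fin N → E N, (∀ i, v i ∈ C) ∧ LinearIndependent ℝ v ∧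
      Submodule.span ℝ (Set.range v) = ⊤ := by
  obtain ⟨b, hbC, hbsp, hbind⟩ := exists_linearIndependent ℝ C
  haveI : Fintype b := (hbind.setFinite).fintype
  have hB : Module.Basis b ℝ (E N) := Module.Basis.mk hbind (by rw [Subtype.range_coe, hbsp, hspan])
  have hcard : Fintype.card b = N := by
    have h1 := Module.finrank_eq_card_basis hB
    rw [finrank_euclideanSpace_fin] at h1
    omega
  let e : Fin N ≃ b := (Fintype.equivFinOfCardEq hcard).symm
  refine ⟨fun i => (e i : E N), fun i => hbC (e i).2, hbind.comp e e.injective, ?_⟩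
  have hr : Set.range (fun i => (e i : E N)) = b := by
    have : Set.range (fun i => (e i : E N)) = Subtype.val '' (Set.range e) := by
      rw [← Set.range_comp]; rfl
    rw [this, e.range_eq_univ, Set.image_univ, Subtype.range_coe]
  rw [hr, hbsp, hspan]

lemma basisIn_set_finite {P : Set (E N)} (hfin : P.Finite) :
    {v : Fin N → E N | BasisIn P v}.Finite := by
  apply Set.Finite.subset (Set.Finite.pi (fun _ : Fin N => hfin))
  intro v hv
  exact fun i _ => hv.1 i

lemma chain_reflect {P : Set (E N)} {ρ : ℝ} {Ω : Set (E N)} (hΩ : ReflProp P ρ Ω)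
    {w : Fin N → E N} (hwP : ∀ i, w i ∈ P) (hw1 : ∀ i, ‖w i‖ = 1)
    {x : E N} (hx : x ∈ Ω) {a : Fin N → ℝ} (ha : ∀ i, 0 < a i) {lam : ℝ}
    (hsum : ∑ i, a i < lam) (hip : ∀ i, ρ + lam ≤ ⟪x, w i⟫) :
    ∀ F : Finset (Fin N), x - ∑ i ∈ F, a i • w i ∈ Ω := by
  intro F
  induction F using Finset.induction_on with
  | empty => simpa using hx
  | @insert k F hk IH =>
    set z := x - ∑ i ∈ F, a i • w i with hz
    set s : ℝ := ⟪z, w k⟫ - a k / 2 with hs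
    have hzwk : ⟪z, w k⟫ = ⟪x, w k⟫ - ∑ i ∈ F, a i * ⟪w i, w k⟫ := by
      rw [hz, inner_sub_left, sum_inner]
      congr 1
      exact Finset.sum_congr rfl fun i _ => real_inner_smul_left _ _ _
    have hinner_le : ∀ i, ⟪w i, w k⟫ ≤ 1 := by
      intro i
      calc ⟪w i, w k⟫ ≤ ‖w i‖ * ‖w k‖ := real_inner_le_norm _ _
        _ = 1 := by rw [hw1 i, hw1 k]; ring
    have hsumF : ∑ i ∈ F, a i * ⟪w i, w k⟫ ≤ ∑ i ∈ F, a i := by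
      apply Finset.sum_le_sum
      intro i _
      have := (ha i).le
      nlinarith [hinner_le i]
    have hFk : ∑ i ∈ F, a i + a k ≤ ∑ i, a i := by
      have : ∑ i ∈ insert k F, a i ≤ ∑ i, a i :=
        Finset.sum_le_sum_of_subset_of_nonneg (Finset.subset_univ _)
          (fun i _ _ => (ha i).le)
      rwa [Finset.sum_insert hk, add_comm] at this
    have hsρ : s > ρ := by
      have h1 := hip k
      have h2 := ha k
      rw [hs, hzwk]
      linarith
    have happ := hΩ (w k) (hwP k) s hsρ
    have hwkk : ⟪w k, w k⟫ = (1 : ℝ) := by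
      have := real_inner_self_eq_norm_mul_norm (w k)
      rw [hw1 k] at this; simpa using this
    have hrefl : reflect (w k) s z = z - a k • w k := by
      rw [reflect]
      congr 1
      have : 2 * (⟪z, w k⟫ - s) = a k := by rw [hs]; ring
      rw [this]
    have hmem : z - a k • w k ∈ Ω := by
      have h1 : reflect (w k) s z ∈ reflect (w k) s '' Ω := ⟨z, IH, rfl⟩
      have h2 : ⟪z - a k • w k, w k⟫ < s := by
        rw [inner_sub_left, real_inner_smul_left, hwkk]
        have := ha k
        rw [hs]; linarith
      rw [hrefl] at h1
      exact (happ ⟨h1, h2⟩).1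
    rw [Finset.sum_insert hk]
    have : x - (a k • w k + ∑ i ∈ F, a i • w i) = z - a k • w k := by
      rw [hz]; abel
    rw [this]
    exact hmem
lemma sigma2_bddAbove {P : Set (E N)} (hN : 1 ≤ N) {v : Fin N → E N}
    (hv : BasisIn P v) :
    BddAbove {t | ∃ z : E N, (∀ p ∈ P, |⟪p, z⟫| ≤ 1) ∧ t = ‖z‖} := by
  classical
  let T : E N →ₗ[ℝ] E N :=
    { toFun := fun z => (WithLp.toLp 2 (fun i => ⟪v i, z⟫) : EuclideanSpace ℝ (Fin N))
      map_add' := by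
        intro y z; ext i
        show ⟪v i, y + z⟫ = ⟪v i, y⟫ + ⟪v i, z⟫
        exact inner_add_right _ _ _
      map_smul' := by
        intro c z; ext i
        show ⟪v i, c • z⟫ = c * ⟪v i, z⟫
        exact real_inner_smul_right _ _ _ }
  have hTinj : Function.Injective T := by
    rw [← LinearMap.ker_eq_bot, Submodule.eq_bot_iff]
    intro z hz
    have hz' : ∀ i, ⟪v i, z⟫ = 0 := fun i => congrArg (fun w : E N => w i) (LinearMap.mem_ker.mp hz)
    have hmem : z ∈ Submodule.span ℝ (Set.range v) := by rw [hv.2.2]; trivial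
    have : ⟪z, z⟫ = 0 := by
      refine Submodule.span_induction (p := fun y _ => ⟪y, z⟫ = 0) ?_ ?_ ?_ ?_ hmem
      · rintro y ⟨i, rfl⟩; exact hz' i
      · simp
      · intro y₁ y₂ _ _ h1 h2; rw [inner_add_left, h1, h2]; ring
      · intro c y _ h1; rw [real_inner_smul_left, h1]; ring
    exact inner_self_eq_zero.mp this
  have hTsurj : Function.Surjective T := LinearMap.injective_iff_surjective.mp hTinj
  let Teq := LinearEquiv.ofBijective T ⟨hTinj, hTsurj⟩
  let S : E N →L[ℝ] E N := LinearMap.toContinuousLinearMap Teq.symm.toLinearMap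
  refine ⟨‖S‖ * Real.sqrt N, ?_⟩
  rintro t ⟨z, hz, rfl⟩
  have h1 : ‖z‖ = ‖S (T z)‖ := by
    have : Teq.symm (Teq z) = z := Teq.symm_apply_apply z
    have h2 : S (T z) = z := this
    rw [h2]
  have hTz : ‖T z‖ ≤ Real.sqrt N := by
    rw [EuclideanSpace.norm_eq]
    have : ∑ i, ‖(T z) i‖ ^ 2 ≤ (N : ℝ) := by
      have : ∀ i : Fin N, ‖(T z) i‖ ^ 2 ≤ 1 := by
        intro i
        have h3 : |⟪v i, z⟫| ≤ 1 := hz _ (hv.1 i)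
        have h4 : ‖(T z) i‖ = |⟪v i, z⟫| := by
          show ‖⟪v i, z⟫‖ = _; exact Real.norm_eq_abs _
        rw [h4]
        nlinarith [abs_nonneg ⟪v i, z⟫]
      calc ∑ i, ‖(T z) i‖ ^ 2 ≤ ∑ _i : Fin N, (1:ℝ) := Finset.sum_le_sum fun i _ => this i
        _ = (N : ℝ) := by simp
    exact Real.sqrt_le_sqrt this
  calc ‖z‖ = ‖S (T z)‖ := h1
    _ ≤ ‖S‖ * ‖T z‖ := S.le_opNorm _
    _ ≤ ‖S‖ * Real.sqrt N := by
        have := norm_nonneg S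
        nlinarith [norm_nonneg (T z)]
lemma span_P_top (hN : 1 ≤ N) {P : Set (E N)} (hEA : CondEA P) :
    Submodule.span ℝ P = ⊤ := by
  have hv0 : (EuclideanSpace.single (⟨0, hN⟩ : Fin N) (1:ℝ)) ≠ 0 := by
    intro h
    have := congrArg (fun w => w (⟨0, hN⟩ : Fin N)) h
    simpa using this
  have h := hEA _ hv0
  refine le_antisymm le_top ?_
  rw [← h]
  exact Submodule.span_mono (fun q hq => hq.1)

lemma exists_basisIn (hN : 1 ≤ N) {P : Set (E N)} (hEA : CondEA P) :
    ∃ v : Fin N → E N, BasisIn P v := by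
  obtain ⟨v, h1, h2, h3⟩ := exists_basis_subset (span_P_top hN hEA)
  exact ⟨v, h1, h2, h3⟩

lemma sigma1_facts (hN : 1 ≤ N) {P : Set (E N)} (hP : IsRootSystem P) (hEA : CondEA P) :
    0 < sigma1 P ∧ sigma1 P ≤ 1 ∧
    ∀ p₁ ∈ P, ∃ v : Fin N → E N, BasisIn P v ∧ ∀ i, sigma1 P ≤ |⟪v i, p₁⟫| := by
  haveI : Nonempty (Fin N) := ⟨⟨0, hN⟩⟩
  set Tset : E N → Set ℝ := fun p => {t | ∃ v : Fin N → E N, BasisIn P v ∧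
    t = sInf (Set.range fun i => |⟪v i, p⟫|)} with hTset
  have hTimg : ∀ p, Tset p =
      (fun v : Fin N → E N => sInf (Set.range fun i => |⟪v i, p⟫|)) '' {v | BasisIn P v} := by
    intro p
    ext t
    constructor
    · rintro ⟨v, h1, h2⟩; exact ⟨v, h1, h2.symm⟩
    · rintro ⟨v, h1, h2⟩; exact ⟨v, h1, h2.symm⟩
  have hTfin : ∀ p, (Tset p).Finite := by
    intro p; rw [hTimg p]; exact (basisIn_set_finite hP.1).image _
  have hTne : ∀ p, (Tset p).Nonempty := by
    intro p
    obtain ⟨v, hv⟩ := exists_basisIn hN hEA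
    exact ⟨_, v, hv, rfl⟩
  have hmem_range : ∀ (p : E N) (t : ℝ), t ∈ Tset p →
      ∃ (v : Fin N → E N) (i : Fin N), BasisIn P v ∧ t = |⟪v i, p⟫| ∧
        ∀ j, t ≤ |⟪v j, p⟫| := by
    rintro p t ⟨v, hv, rfl⟩
    have hfin : (Set.range fun i => |⟪v i, p⟫|).Finite := Set.finite_range _
    have hne : (Set.range fun i => |⟪v i, p⟫|).Nonempty := Set.range_nonempty _
    obtain ⟨i, hi⟩ := hne.csInf_mem hfin
    refine ⟨v, i, hv, hi.symm, fun j => csInf_le ?_ ⟨j, rfl⟩⟩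
    exact ⟨0, by rintro r ⟨j, rfl⟩; positivity⟩
  have hT01 : ∀ p ∈ P, ∀ t ∈ Tset p, 0 ≤ t ∧ t ≤ 1 := by
    intro p hp t ht
    obtain ⟨v, i, hv, hti, -⟩ := hmem_range p t ht
    constructor
    · rw [hti]; positivity
    · rw [hti]
      calc |⟪v i, p⟫| ≤ ‖v i‖ * ‖p‖ := abs_real_inner_le_norm _ _
        _ = 1 := by rw [hP.2.1 _ (hv.1 i), hP.2.1 _ hp]; ring
  set S1 : Set ℝ := {s | ∃ p₁ ∈ P, s = sSup (Tset p₁)} with hS1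
  have hsig : sigma1 P = sInf S1 := rfl
  have hS1img : S1 = (fun p => sSup (Tset p)) '' P := by
    ext s
    constructor
    · rintro ⟨p, h1, h2⟩; exact ⟨p, h1, h2.symm⟩
    · rintro ⟨p, h1, h2⟩; exact ⟨p, h1, h2.symm⟩
  have hS1fin : S1.Finite := by rw [hS1img]; exact hP.1.image _
  have hPne : P.Nonempty := by
    obtain ⟨v, hv⟩ := exists_basisIn hN hEA
    exact ⟨v ⟨0, hN⟩, hv.1 _⟩
  have hS1ne : S1.Nonempty := by
    obtain ⟨p, hp⟩ := hPne
    exact ⟨_, p, hp, rfl⟩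
  have hsSup_mem : ∀ p ∈ P, sSup (Tset p) ∈ Tset p := fun p _ =>
    (hTne p).csSup_mem (hTfin p)
  have hS1lb : ∀ s ∈ S1, 0 ≤ s := by
    rintro s ⟨p, hp, rfl⟩
    exact (hT01 p hp _ (hsSup_mem p hp)).1
  have hσmem : sigma1 P ∈ S1 := by rw [hsig]; exact hS1ne.csInf_mem hS1fin
  have hσle : ∀ p ∈ P, sigma1 P ≤ sSup (Tset p) := by
    intro p hp
    rw [hsig]
    exact csInf_le ⟨0, hS1lb⟩ ⟨p, hp, rfl⟩
  obtain ⟨pst, hpst, hσeq⟩ := hσmem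
  have hσ1le1 : sigma1 P ≤ 1 := by
    rw [hσeq]
    exact (hT01 pst hpst _ (hsSup_mem pst hpst)).2
  have hσpos : 0 < sigma1 P := by
    have hpst0 : pst ≠ 0 := by
      intro h
      have := hP.2.1 pst hpst
      rw [h] at this; simp at this
    have hspan := hEA pst hpst0
    obtain ⟨v, hvC, hvi, hvs⟩ := exists_basis_subset hspan
    have hvB : BasisIn P v := ⟨fun i => (hvC i).1, hvi, hvs⟩
    have htmem : sInf (Set.range fun i => |⟪v i, pst⟫|) ∈ Tset pst := ⟨v, hvB, rfl⟩
    have hfin : (Set.range fun i => |⟪v i, pst⟫|).Finite := Set.finite_range _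
    have hne : (Set.range fun i => |⟪v i, pst⟫|).Nonempty := Set.range_nonempty _
    obtain ⟨i, hi⟩ := hne.csInf_mem hfin
    have htpos : 0 < sInf (Set.range fun i => |⟪v i, pst⟫|) := by
      rw [← hi]
      exact abs_pos.mpr (hvC i).2
    have hbdd : BddAbove (Tset pst) := ⟨1, fun t ht => (hT01 pst hpst t ht).2⟩
    calc (0:ℝ) < sInf (Set.range fun i => |⟪v i, pst⟫|) := htpos
      _ ≤ sSup (Tset pst) := le_csSup hbdd htmem
      _ = sigma1 P := hσeq.symm
  refine ⟨hσpos, hσ1le1, ?_⟩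
  intro p₁ hp₁
  obtain ⟨v, hv, heq⟩ := hsSup_mem p₁ hp₁
  refine ⟨v, hv, fun i => ?_⟩
  calc sigma1 P ≤ sSup (Tset p₁) := hσle p₁ hp₁
    _ = sInf (Set.range fun j => |⟪v j, p₁⟫|) := heq
    _ ≤ |⟪v i, p₁⟫| := csInf_le ⟨0, by rintro r ⟨j, rfl⟩; positivity⟩ ⟨i, rfl⟩
lemma cone_ball_exists (hN : 1 ≤ N) {P : Set (E N)} {v : Fin N → E N} (hv : BasisIn P v) :
    ∃ r : ℝ, 0 < r ∧ ball ((1 / (2 * (N : ℝ))) • ∑ i, v i) r ⊆ Cone 1 v := by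
  haveI : Nonempty (Fin N) := ⟨⟨0, hN⟩⟩
  have hNpos : (0:ℝ) < N := by exact_mod_cast hN
  let B : Module.Basis (Fin N) ℝ (E N) := Module.Basis.mk hv.2.1 (by rw [hv.2.2])
  have hBv : ∀ i, B i = v i := fun i => by simp [B]
  set S : Set (Fin N → ℝ) := {a | (∀ i, 0 < a i) ∧ ∑ i, a i < 1} with hS
  have hSopen : IsOpen S := by
    have h1 : IsOpen {a : Fin N → ℝ | ∀ i, 0 < a i} := by
      have he : {a : Fin N → ℝ | ∀ i, 0 < a i} = ⋂ i, {a | 0 < a i} := by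
        ext a; simp [Set.mem_iInter]
      rw [he]
      exact isOpen_iInter_of_finite fun i =>
        isOpen_lt continuous_const (continuous_apply i)
    have h2 : IsOpen {a : Fin N → ℝ | ∑ i, a i < 1} :=
      isOpen_lt (continuous_finset_sum _ fun i _ => continuous_apply i) continuous_const
    exact h1.inter h2
  have hfc : Continuous (B.equivFun) :=
    LinearMap.continuous_of_finiteDimensional (B.equivFun.toLinearMap)
  set ctr : E N := (1 / (2 * (N : ℝ))) • ∑ i, v i with hctr
  have hctr_eq : ctr = B.equivFun.symm (fun _ => 1 / (2 * (N : ℝ))) := by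
    rw [Module.Basis.equivFun_symm_apply, hctr, Finset.smul_sum]
    exact Finset.sum_congr rfl fun i _ => by rw [hBv]
  have hfctr : B.equivFun ctr = fun _ => 1 / (2 * (N : ℝ)) := by
    rw [hctr_eq]; exact B.equivFun.apply_symm_apply _
  have hmem : ctr ∈ B.equivFun ⁻¹' S := by
    show B.equivFun ctr ∈ S
    rw [hfctr]
    constructor
    · intro i; positivity
    · have hsum : ∑ _i : Fin N, (1 / (2 * (N : ℝ))) = N * (1 / (2 * N)) := by
        simp [Finset.sum_const, Finset.card_univ, nsmul_eq_mul]
      rw [hsum]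
      have : (N:ℝ) * (1 / (2 * N)) = 1/2 := by field_simp
      rw [this]; norm_num
  have hopen : IsOpen (B.equivFun ⁻¹' S) := hSopen.preimage hfc
  obtain ⟨ε, hε, hball⟩ := Metric.isOpen_iff.mp hopen ctr hmem
  refine ⟨ε, hε, fun u hu => ?_⟩
  have huS : B.equivFun u ∈ S := hball hu
  refine ⟨B.equivFun u, huS.1, huS.2, ?_⟩
  have h1 : B.equivFun.symm (B.equivFun u) = u := B.equivFun.symm_apply_apply u
  rw [Module.Basis.equivFun_symm_apply] at h1
  calc u = ∑ i, B.equivFun u i • B i := h1.symm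
    _ = ∑ i, B.equivFun u i • v i := Finset.sum_congr rfl fun i _ => by rw [hBv]

lemma cone_radius_le_two (hN : 1 ≤ N) {P : Set (E N)} (hP : IsRootSystem P)
    {v : Fin N → E N} (hv : BasisIn P v) {r : ℝ}
    (hr : ball ((1 / (2 * (N : ℝ))) • ∑ i, v i) r ⊆ Cone 1 v) : r ≤ 2 := by
  by_contra hcon
  push_neg at hcon
  have hNpos : (0:ℝ) < N := by exact_mod_cast hN
  set ctr : E N := (1 / (2 * (N : ℝ))) • ∑ i, v i with hctrd
  have hctrn : ‖ctr‖ ≤ 1/2 := by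
    rw [hctrd, norm_smul]
    have h1 : ‖∑ i, v i‖ ≤ (N:ℝ) := by
      calc ‖∑ i, v i‖ ≤ ∑ i, ‖v i‖ := norm_sum_le _ _
        _ = (N:ℝ) := by
          rw [Finset.sum_congr rfl fun i _ => hP.2.1 _ (hv.1 i)]
          simp
    have h2 : ‖(1 / (2 * (N : ℝ)))‖ = 1 / (2*(N:ℝ)) := by
      rw [Real.norm_eq_abs, abs_of_pos]; positivity
    rw [h2]
    calc 1 / (2*(N:ℝ)) * ‖∑ i, v i‖ ≤ 1 / (2*(N:ℝ)) * N := by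
          apply mul_le_mul_of_nonneg_left h1; positivity
      _ = 1/2 := by field_simp
  set u₀ : E N := EuclideanSpace.single (⟨0, hN⟩ : Fin N) (1:ℝ) with hu₀
  have hu₀n : ‖u₀‖ = 1 := by rw [hu₀, EuclideanSpace.norm_single]; norm_num
  set q : E N := ctr + (3/2 : ℝ) • u₀ with hq
  have hqball : q ∈ ball ctr r := by
    rw [mem_ball, dist_eq_norm]
    have : q - ctr = (3/2 : ℝ) • u₀ := by rw [hq]; abel
    rw [this, norm_smul, hu₀n]
    simp only [Real.norm_eq_abs]
    rw [abs_of_pos (by norm_num : (0:ℝ) < 3/2)]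
    linarith
  obtain ⟨a, ha, hasum, haq⟩ := hr hqball
  have hqn1 : ‖q‖ < 1 := by
    rw [haq]
    calc ‖∑ i, a i • v i‖ ≤ ∑ i, ‖a i • v i‖ := norm_sum_le _ _
      _ = ∑ i, a i := by
          refine Finset.sum_congr rfl fun i _ => ?_
          rw [norm_smul, hP.2.1 _ (hv.1 i), Real.norm_eq_abs, abs_of_pos (ha i)]; ring
      _ < 1 := hasum
  have hqn2 : (1:ℝ) ≤ ‖q‖ := by
    have : (3/2 : ℝ) = ‖(3/2 : ℝ) • u₀‖ := by
      rw [norm_smul, hu₀n, Real.norm_eq_abs, abs_of_pos (by norm_num : (0:ℝ) < 3/2)]; ring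
    have h3 : ‖(3/2 : ℝ) • u₀‖ ≤ ‖q‖ + ‖ctr‖ := by
      have h4 : (3/2 : ℝ) • u₀ = q - ctr := by rw [hq]; abel
      rw [h4]
      exact norm_sub_le _ _
    linarith
  linarith
lemma sigma3_facts (hN : 1 ≤ N) {P : Set (E N)} (hP : IsRootSystem P) (hEA : CondEA P) :
    0 < sigma3 P ∧ ∀ v : Fin N → E N, BasisIn P v → ∀ u : E N,
      dist u ((1 / (2 * (N : ℝ))) • ∑ i, v i) < sigma3 P → u ∈ Cone 1 v := by
  set R : (Fin N → E N) → Set ℝ := fun v =>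
    {r | 0 < r ∧ ball ((1 / (2 * (N : ℝ))) • ∑ i, v i) r ⊆ Cone 1 v} with hR
  have hRne : ∀ v, BasisIn P v → (R v).Nonempty := by
    intro v hv
    obtain ⟨r, h1, h2⟩ := cone_ball_exists hN hv
    exact ⟨r, h1, h2⟩
  have hRbdd : ∀ v, BasisIn P v → BddAbove (R v) :=
    fun v hv => ⟨2, fun r hrR => cone_radius_le_two hN hP hv hrR.2⟩
  have hrpos : ∀ v, BasisIn P v → 0 < sSup (R v) := by
    intro v hv
    obtain ⟨r, hr1, hr2⟩ := hRne v hv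
    calc (0:ℝ) < r := hr1
      _ ≤ sSup (R v) := le_csSup (hRbdd v hv) ⟨hr1, hr2⟩
  set S3 : Set ℝ := {s | ∃ v : Fin N → E N, BasisIn P v ∧ s = sSup (R v)} with hS3
  have hsig : sigma3 P = sInf S3 := rfl
  have hS3img : S3 = (fun v => sSup (R v)) '' {v | BasisIn P v} := by
    ext s
    constructor
    · rintro ⟨v, h1, h2⟩; exact ⟨v, h1, h2.symm⟩
    · rintro ⟨v, h1, h2⟩; exact ⟨v, h1, h2.symm⟩
  have hS3fin : S3.Finite := by rw [hS3img]; exact (basisIn_set_finite hP.1).image _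
  have hS3ne : S3.Nonempty := by
    obtain ⟨v, hv⟩ := exists_basisIn hN hEA
    exact ⟨_, v, hv, rfl⟩
  have hσ3mem : sigma3 P ∈ S3 := by rw [hsig]; exact hS3ne.csInf_mem hS3fin
  have hσ3pos : 0 < sigma3 P := by
    obtain ⟨v, hv, heq⟩ := hσ3mem
    rw [heq]; exact hrpos v hv
  have hσ3le : ∀ v, BasisIn P v → sigma3 P ≤ sSup (R v) := by
    intro v hv
    rw [hsig]
    refine csInf_le ⟨0, ?_⟩ ⟨v, hv, rfl⟩
    rintro s ⟨v', hv', rfl⟩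
    exact (hrpos v' hv').le
  refine ⟨hσ3pos, fun v hv u hu => ?_⟩
  obtain ⟨r, hrR, hur⟩ := exists_lt_of_lt_csSup (hRne v hv) (lt_of_lt_of_le hu (hσ3le v hv))
  exact hrR.2 (mem_ball.mpr hur)
lemma key_basis (hN : 1 ≤ N) {P : Set (E N)} (hP : IsRootSystem P) (hEA : CondEA P)
    {x : E N} {M : ℝ} (hM : 0 < M) {p₁ : E N} (hp₁ : p₁ ∈ P) (hMp : |⟪x, p₁⟫| = M)
    (hmax : ∀ p ∈ P, |⟪x, p⟫| ≤ M) :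
    ∃ w : Fin N → E N, BasisIn P w ∧ ∀ i, sigma1 P * M ≤ ⟪x, w i⟫ := by
  obtain ⟨hσpos, hσle1, hbs⟩ := sigma1_facts hN hP hEA
  obtain ⟨b, hbB, hbip⟩ := hbs p₁ hp₁
  set C : Set (E N) := {q | q ∈ P ∧ sigma1 P * M ≤ |⟪x, q⟫|} with hC
  have hp₁C : p₁ ∈ C := ⟨hp₁, by rw [hMp]; nlinarith⟩
  have hspanC : Submodule.span ℝ C = ⊤ := by
    by_contra hne
    have hbi : ∃ i, b i ∉ Submodule.span ℝ C := by
      by_contra hall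
      push_neg at hall
      apply hne
      refine le_antisymm le_top ?_
      rw [← hbB.2.2]
      refine Submodule.span_le.mpr ?_
      rintro y ⟨i, rfl⟩
      exact hall i
    obtain ⟨i, hiV⟩ := hbi
    set y : E N := b i with hy
    have hyP : y ∈ P := hbB.1 i
    have hyC : y ∉ C := fun h => hiV (Submodule.subset_span h)
    have hy1 : |⟪x, y⟫| < sigma1 P * M := by
      by_contra hle
      push_neg at hle
      exact hyC ⟨hyP, hle⟩
    set y' : E N := y - (2 * ⟪y, p₁⟫) • p₁ with hy'
    have hy'P : y' ∈ P := reflect0_mem_rs hP hp₁ hyP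
    have hy'V : y' ∉ Submodule.span ℝ C := by
      intro h
      apply hiV
      have hp₁V : p₁ ∈ Submodule.span ℝ C := Submodule.subset_span hp₁C
      have hdec : y = y' + (2 * ⟪y, p₁⟫) • p₁ := by rw [hy']; abel
      show y ∈ Submodule.span ℝ C
      rw [hdec]
      exact Submodule.add_mem _ h (Submodule.smul_mem _ _ hp₁V)
    have hy'C : y' ∉ C := fun h => hy'V (Submodule.subset_span h)
    have hy2 : |⟪x, y'⟫| < sigma1 P * M := by
      by_contra hle
      push_neg at hle
      exact hy'C ⟨hy'P, hle⟩
    have hinner : ⟪x, y'⟫ = ⟪x, y⟫ - 2 * ⟪y, p₁⟫ * ⟪x, p₁⟫ := by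
      rw [hy', inner_sub_right, real_inner_smul_right]
    have hcontr : |⟪y, p₁⟫| < sigma1 P := by
      have h2 : |2 * ⟪y, p₁⟫ * ⟪x, p₁⟫| ≤ |⟪x, y⟫| + |⟪x, y⟫ - 2 * ⟪y, p₁⟫ * ⟪x, p₁⟫| := by
        calc |2 * ⟪y, p₁⟫ * ⟪x, p₁⟫|
            = |⟪x, y⟫ - (⟪x, y⟫ - 2 * ⟪y, p₁⟫ * ⟪x, p₁⟫)| := by ring_nf
          _ ≤ |⟪x, y⟫| + |⟪x, y⟫ - 2 * ⟪y, p₁⟫ * ⟪x, p₁⟫| := abs_sub _ _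
      rw [← hinner] at h2
      have h3 : |2 * ⟪y, p₁⟫ * ⟪x, p₁⟫| = 2 * |⟪y, p₁⟫| * M := by
        rw [abs_mul, abs_mul, hMp, abs_two]
      rw [h3] at h2
      nlinarith
    exact absurd (hbip i) (not_le.mpr hcontr)
  obtain ⟨w0, hw0C, hw0li, hw0sp⟩ := exists_basis_subset hspanC
  set u : Fin N → ℝˣ := fun i => if 0 ≤ ⟪x, w0 i⟫ then 1 else -1 with hu
  set w : Fin N → E N := fun i => u i • w0 i with hw
  have hwcoe : ∀ i, w i = (u i : ℝ) • w0 i := fun i => rfl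
  have hite : ∀ i, u i = if 0 ≤ ⟪x, w0 i⟫ then 1 else -1 := fun i => rfl
  have hwval : ∀ i, (0 ≤ ⟪x, w0 i⟫ → w i = w0 i) ∧ (¬ 0 ≤ ⟪x, w0 i⟫ → w i = -(w0 i)) := by
    intro i
    constructor
    · intro h
      rw [hwcoe i, hite i, if_pos h, Units.val_one, one_smul]
    · intro h
      rw [hwcoe i, hite i, if_neg h, Units.val_neg, Units.val_one, neg_smul, one_smul]
  have hwP : ∀ i, w i ∈ P := by
    intro i
    by_cases h : 0 ≤ ⟪x, w0 i⟫
    · rw [(hwval i).1 h]; exact (hw0C i).1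
    · rw [(hwval i).2 h]; exact neg_mem_rs hP (hw0C i).1
  have hwip : ∀ i, sigma1 P * M ≤ ⟪x, w i⟫ := by
    intro i
    have habs : ⟪x, w i⟫ = |⟪x, w0 i⟫| := by
      by_cases h : 0 ≤ ⟪x, w0 i⟫
      · rw [(hwval i).1 h, abs_of_nonneg h]
      · rw [(hwval i).2 h, inner_neg_right]
        push_neg at h
        rw [abs_of_neg h]
    rw [habs]
    exact (hw0C i).2
  have hwli : LinearIndependent ℝ w := hw0li.units_smul u
  have hwsp : Submodule.span ℝ (Set.range w) = ⊤ := by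
    refine le_antisymm le_top ?_
    rw [← hw0sp]
    refine Submodule.span_le.mpr ?_
    rintro z ⟨i, rfl⟩
    have : w0 i = (u i)⁻¹ • w i := (inv_smul_smul (u i) (w0 i)).symm
    rw [this]
    exact Submodule.smul_mem _ _ (Submodule.subset_span ⟨i, rfl⟩)
  exact ⟨w, ⟨hwP, hwli, hwsp⟩, hwip⟩
/-- interior ball near far-away points of `Ω`. -/
theorem interior_ball (N : ℕ) (hN : 1 ≤ N) (P : Set (E N))
    (hP : IsRootSystem P) (hEA : CondEA P) (ρ : ℝ) (hρ : 0 ≤ ρ)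
    (Ω : Set (E N)) (hΩ : ReflProp P ρ Ω) (x : E N) (hx : x ∈ Ω)
    (c : ℝ) (hc : 0 < c)
    (hfar : ‖x‖ ≥ (sigma1 P)⁻¹ * sigma2 P * (ρ + c * (sigma3 P)⁻¹)) :
    ∃ z₀ : E N, ‖x - z₀‖ ≤ c / (2 * sigma3 P) ∧ ball z₀ c ⊆ Ω := by
  haveI : Nonempty (Fin N) := ⟨⟨0, hN⟩⟩
  obtain ⟨hσ1pos, hσ1le1, -⟩ := sigma1_facts hN hP hEA
  obtain ⟨hσ3pos, hballprop⟩ := sigma3_facts hN hP hEA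
  set lam : ℝ := c * (sigma3 P)⁻¹ with hlam
  have hlampos : 0 < lam := mul_pos hc (inv_pos.mpr hσ3pos)
  obtain ⟨v₀, hv₀⟩ := exists_basisIn hN hEA
  have hPne : P.Nonempty := ⟨v₀ ⟨0, hN⟩, hv₀.1 _⟩
  have hbdd2 := sigma2_bddAbove hN hv₀
  have hσ2ge1 : 1 ≤ sigma2 P := by
    obtain ⟨p₀, hp₀⟩ := hPne
    have hmem : (1:ℝ) ∈ {t | ∃ z : E N, (∀ p ∈ P, |⟪p, z⟫| ≤ 1) ∧ t = ‖z‖} := by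
      refine ⟨p₀, fun p hp => ?_, (hP.2.1 _ hp₀).symm⟩
      calc |⟪p, p₀⟫| ≤ ‖p‖ * ‖p₀‖ := abs_real_inner_le_norm _ _
        _ = 1 := by rw [hP.2.1 _ hp, hP.2.1 _ hp₀]; ring
    exact le_csSup hbdd2 hmem
  have hσ2pos : 0 < sigma2 P := lt_of_lt_of_le one_pos hσ2ge1
  have hρlam : 0 < ρ + lam := by linarith
  have hxpos : 0 < ‖x‖ := by
    have h1 : 0 < (sigma1 P)⁻¹ * sigma2 P * (ρ + lam) := by positivity
    linarith [hfar]
  obtain ⟨p₁, hp₁, hp₁max⟩ := Set.exists_max_image P (fun p => |⟪x, p⟫|) hP.1 hPne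
  set M : ℝ := |⟪x, p₁⟫| with hMdef
  have hMmax : ∀ p ∈ P, |⟪x, p⟫| ≤ M := hp₁max
  have hMpos : 0 < M := by
    rcases lt_or_ge 0 M with h | h
    · exact h
    · exfalso
      have hall : ∀ p ∈ P, ⟪p, x⟫ = 0 := by
        intro p hp
        have h1 : |⟪x, p⟫| ≤ 0 := le_trans (hMmax p hp) h
        have h2 : ⟪x, p⟫ = 0 := abs_nonpos_iff.mp h1
        rw [real_inner_comm]; exact h2
      have hxx : ⟪x, x⟫ = 0 := by
        have hmem : x ∈ Submodule.span ℝ P := by rw [span_P_top hN hEA]; trivial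
        refine Submodule.span_induction (p := fun y _ => ⟪y, x⟫ = 0) ?_ ?_ ?_ ?_ hmem
        · exact hall
        · simp
        · intro y₁ y₂ _ _ h1 h2; rw [inner_add_left, h1, h2]; ring
        · intro a y _ h1; rw [real_inner_smul_left, h1]; ring
      have : x = 0 := inner_self_eq_zero.mp hxx
      rw [this] at hxpos; simp at hxpos
  have hdual : ∀ p ∈ P, |⟪p, M⁻¹ • x⟫| ≤ 1 := by
    intro p hp
    rw [real_inner_smul_right, abs_mul, abs_inv, abs_of_pos hMpos, real_inner_comm]
    have h1 := hMmax p hp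
    rw [inv_mul_le_iff₀ hMpos]
    linarith
  have hxle : ‖x‖ ≤ sigma2 P * M := by
    have hnx : ‖M⁻¹ • x‖ ≤ sigma2 P := le_csSup hbdd2 ⟨M⁻¹ • x, hdual, rfl⟩
    rw [norm_smul, Real.norm_eq_abs, abs_inv, abs_of_pos hMpos] at hnx
    calc ‖x‖ = M * (M⁻¹ * ‖x‖) := by field_simp
      _ ≤ M * sigma2 P := by apply mul_le_mul_of_nonneg_left hnx hMpos.le
      _ = sigma2 P * M := by ring
  have hM2 : ρ + lam ≤ sigma1 P * M := by
    have h1 : (sigma1 P)⁻¹ * sigma2 P * (ρ + lam) ≤ sigma2 P * M := le_trans hfar hxle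
    have h2 : (sigma1 P)⁻¹ * (ρ + lam) * sigma2 P ≤ M * sigma2 P := by nlinarith
    have h3 : (sigma1 P)⁻¹ * (ρ + lam) ≤ M := le_of_mul_le_mul_right h2 hσ2pos
    calc ρ + lam = sigma1 P * ((sigma1 P)⁻¹ * (ρ + lam)) := by field_simp
      _ ≤ sigma1 P * M := mul_le_mul_of_nonneg_left h3 hσ1pos.le
  obtain ⟨w, hwB, hwip⟩ := key_basis hN hP hEA hMpos hp₁ hMdef.symm hMmax
  have hwipρ : ∀ i, ρ + lam ≤ ⟪x, w i⟫ := fun i => le_trans hM2 (hwip i)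
  have hw1 : ∀ i, ‖w i‖ = 1 := fun i => hP.2.1 _ (hwB.1 i)
  set ctr : E N := (1 / (2 * (N : ℝ))) • ∑ i, w i with hctr
  have hNpos : (0:ℝ) < N := by exact_mod_cast hN
  have hctrn : ‖ctr‖ ≤ 1/2 := by
    rw [hctr, norm_smul]
    have h1 : ‖∑ i, w i‖ ≤ (N:ℝ) := by
      calc ‖∑ i, w i‖ ≤ ∑ i, ‖w i‖ := norm_sum_le _ _
        _ = (N:ℝ) := by rw [Finset.sum_congr rfl fun i _ => hw1 i]; simp
    have h2 : ‖(1 / (2 * (N : ℝ)))‖ = 1 / (2*(N:ℝ)) := by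
      rw [Real.norm_eq_abs, abs_of_pos]; positivity
    rw [h2]
    calc 1 / (2*(N:ℝ)) * ‖∑ i, w i‖ ≤ 1 / (2*(N:ℝ)) * N := by
          apply mul_le_mul_of_nonneg_left h1; positivity
      _ = 1/2 := by field_simp
  set z₀ : E N := x - lam • ctr with hz₀
  refine ⟨z₀, ?_, ?_⟩
  · have h1 : x - z₀ = lam • ctr := by rw [hz₀]; abel
    rw [h1, norm_smul, Real.norm_eq_abs, abs_of_pos hlampos]
    have h2 : lam * ‖ctr‖ ≤ lam * (1/2) := mul_le_mul_of_nonneg_left hctrn hlampos.le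
    have h3 : lam * (1/2) = c / (2 * sigma3 P) := by
      rw [hlam]
      conv_rhs => rw [div_eq_mul_inv, mul_inv]
      ring
    linarith
  · intro y hy
    have hdist : dist (lam⁻¹ • (x - y)) ctr < sigma3 P := by
      have h1 : lam⁻¹ • (x - y) - ctr = lam⁻¹ • (z₀ - y) := by
        apply smul_right_injective (E N) hlampos.ne'
        show lam • (lam⁻¹ • (x - y) - ctr) = lam • (lam⁻¹ • (z₀ - y))
        rw [smul_sub, smul_inv_smul₀ hlampos.ne', smul_inv_smul₀ hlampos.ne', hz₀]
        abel
      rw [dist_eq_norm, h1, norm_smul, Real.norm_eq_abs, abs_inv, abs_of_pos hlampos]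
      have h2 : ‖z₀ - y‖ < c := by
        rw [mem_ball, dist_eq_norm] at hy
        rw [← norm_neg]
        simpa [neg_sub] using hy
      have h3 : lam⁻¹ * ‖z₀ - y‖ < lam⁻¹ * c :=
        mul_lt_mul_of_pos_left h2 (inv_pos.mpr hlampos)
      have h4 : lam⁻¹ * c = sigma3 P := by
        rw [hlam]
        field_simp
      linarith
    have hu := hballprop w hwB _ hdist
    obtain ⟨a, ha, hasum, haeq⟩ := hu
    have hxy : x - y = ∑ i, (lam * a i) • w i := by
      have h1 : x - y = lam • (lam⁻¹ • (x - y)) := (smul_inv_smul₀ hlampos.ne' _).symm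
      rw [h1, haeq, Finset.smul_sum]
      exact Finset.sum_congr rfl fun i _ => (smul_smul _ _ _)
    have hsum' : ∑ i, lam * a i < lam := by
      rw [← Finset.mul_sum]
      calc lam * ∑ i, a i < lam * 1 := mul_lt_mul_of_pos_left hasum hlampos
        _ = lam := mul_one _
    have hmem := chain_reflect hΩ hwB.1 hw1 hx (fun i => mul_pos hlampos (ha i))
      hsum' hwipρ Finset.univ
    have h5 : y = x - ∑ i, (lam * a i) • w i := by rw [← hxy]; abel
    rw [h5]
    exact hmem
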